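/- Let H be a nonempty well-matched stack history with no failed operations and concurrency k. Then for every partition state S1 of H: (1) the set of nonterminals of the form Push(v), Peek(v), or T(ε) that belong to M(S1, S2) for some partition state S2 ⊃ S1 has at most k + 1 elements; and (2) the set of nonterminals T(v) with v ∈ V that belong to M(S2, S1) for some partition state S2 ⊂ S1 has at most k elements. -/
import Mathlib


structure Operation (M V : Type) where
  id : ℕ
  method : M
  value : V
  tinv : ℚ
  tres : ℚ
deriving DecidableEq

def WellFormed {M V : Type} (H : Finset (Operation M V)) : Prop :=
  ∀ o ∈ H, o.tinv < o.tres

def IsPartitionState {M V : Type} (H S : Finset (Operation M V)) : Prop :=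
  S ⊆ H ∧ ∃ t : ℚ, ∀ o ∈ H, (o.tres < t → o ∈ S) ∧ (t < o.tinv → o ∉ S)

def IsLinearization {M V : Type} (X : Finset (Operation M V)) (ℓ : Operation M V → ℚ) : Prop :=
  Set.InjOn ℓ ↑X ∧ ∀ o ∈ X, o.tinv < ℓ o ∧ ℓ o < o.tres

/-- The set of all invocation and response times of `H`. -/
def histTimes {M V : Type} [DecidableEq M] [DecidableEq V]
    (H : Finset (Operation M V)) : Finset ℚ :=
  H.image (fun o => o.tinv) ∪ H.image (fun o => o.tres)

/-- Concurrency: the maximum over t ∈ 𝒯_H of the number of operations whose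
interval contains t. -/
def concurrency {M V : Type} [DecidableEq M] [DecidableEq V]
    (H : Finset (Operation M V)) : ℕ :=
  (histTimes H).sup (fun t => (H.filter (fun o => o.tinv ≤ t ∧ t ≤ o.tres)).card)

inductive StackOp (V : Type) : Type
  | push (v : V) : StackOp V
  | pop (v : V) : StackOp V
  | peek (v : V) : StackOp V
deriving DecidableEq

/-- Execution of stack sequences: `StackExec σ w σ'` holds when the sequence
`w` can be legally executed starting from stack `σ` (top at the head), ending
with stack `σ'`.  `push v` pushes `v`; `pop v` (resp. `peek v`) is enabled
only when the top is `v` and removes it (resp. leaves the stack unchanged). -/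
inductive StackExec {V : Type} : List V → List (StackOp V) → List V → Prop
  | nil (σ : List V) : StackExec σ [] σ
  | push {σ σ' : List V} {w : List (StackOp V)} (v : V) :
      StackExec (v :: σ) w σ' → StackExec σ (StackOp.push v :: w) σ'
  | pop {σ σ' : List V} {w : List (StackOp V)} (v : V) :
      StackExec σ w σ' → StackExec (v :: σ) (StackOp.pop v :: w) σ'
  | peek {σ σ' : List V} {w : List (StackOp V)} (v : V) :
      StackExec (v :: σ) w σ' → StackExec (v :: σ) (StackOp.peek v :: w) σ'

/-- The stack specification: sequences executable from the empty stack. -/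
def TStack (V : Type) : Set (List (StackOp V)) :=
  {w | ∃ σ : List V, StackExec [] w σ}

/-- Nonterminals of the stack grammar: `T0` is `T(ε)`, `Tv v` is `T(v)`,
`Pu v` is `Push(v)` and `Pe v` is `Peek(v)`. -/
inductive StackNT (V : Type) : Type
  | T0 : StackNT V
  | Tv (v : V) : StackNT V
  | Pu (v : V) : StackNT V
  | Pe (v : V) : StackNT V
deriving DecidableEq

/-- Grammar symbols: nonterminals (left) or terminals (right). -/
abbrev GSym (V : Type) : Type := StackNT V ⊕ StackOp V

/-- Productions of the stack grammar. -/
inductive StackProd {V : Type} : StackNT V → List (GSym V) → Prop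
  | r1 (v : V) : StackProd StackNT.T0 [Sum.inl (StackNT.Pu v), Sum.inl (StackNT.Tv v)]
  | r2 (v : V) : StackProd (StackNT.Tv v) [Sum.inl (StackNT.Pe v), Sum.inl (StackNT.Tv v)]
  | r3 (v : V) : StackProd (StackNT.Tv v) [Sum.inl StackNT.T0, Sum.inl (StackNT.Tv v)]
  | r4 (v : V) : StackProd (StackNT.Tv v) [Sum.inr (StackOp.pop v)]
  | r5 (v : V) : StackProd (StackNT.Pu v) [Sum.inr (StackOp.push v)]
  | r6 (v : V) : StackProd (StackNT.Pe v) [Sum.inr (StackOp.peek v)]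

/-- One rewriting step of the stack grammar. -/
def StackStep {V : Type} (x y : List (GSym V)) : Prop :=
  ∃ (p s : List (GSym V)) (A : StackNT V) (rhs : List (GSym V)),
    StackProd A rhs ∧ x = p ++ Sum.inl A :: s ∧ y = p ++ rhs ++ s

/-- Derivation relation `→*` of the stack grammar. -/
def StackDerives {V : Type} : List (GSym V) → List (GSym V) → Prop :=
  Relation.ReflTransGen StackStep

/-- The language of the stack grammar: strings of terminals derivable from
the start symbol `T(ε)`. -/
def StackLang (V : Type) : Set (List (StackOp V)) :=
  {w | StackDerives [Sum.inl StackNT.T0] (w.map Sum.inr)}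

/-- Methods of the stack data type. -/
inductive StackMethod : Type
  | push : StackMethod
  | pop : StackMethod
  | peek : StackMethod
deriving DecidableEq

/-- The stack symbol `m(o)(v(o))` of an operation. -/
def absStackOp {V : Type} (o : Operation StackMethod V) : StackOp V :=
  match o.method with
  | StackMethod.push => StackOp.push o.value
  | StackMethod.pop => StackOp.pop o.value
  | StackMethod.peek => StackOp.peek o.value

/-- The nonterminal directly matching a single operation:
a `push v` yields `Push(v)`, a `peek v` yields `Peek(v)`, and a `pop v`
yields `T(v)`. -/
def baseNT {V : Type} (m : StackMethod) (v : V) : StackNT V :=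
  match m with
  | StackMethod.push => StackNT.Pu v
  | StackMethod.pop => StackNT.Tv v
  | StackMethod.peek => StackNT.Pe v

/-- The production table `M` of a stack history `H`:
`MRel H S1 S2 P` means `P ∈ M(S1, S2)`. -/
inductive MRel {V : Type} [DecidableEq V] (H : Finset (Operation StackMethod V)) :
    Finset (Operation StackMethod V) → Finset (Operation StackMethod V) →
      StackNT V → Prop
  | base (S1 : Finset (Operation StackMethod V)) (o : Operation StackMethod V)
      (h1 : IsPartitionState H S1) (h2 : IsPartitionState H (insert o S1))
      (ho : o ∈ H) (hno : o ∉ S1) :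
      MRel H S1 (insert o S1) (baseNT o.method o.value)
  | step (S1 S2 S3 : Finset (Operation StackMethod V)) (P L R : StackNT V)
      (h13 : S1 ⊂ S3) (h32 : S3 ⊂ S2)
      (h3 : IsPartitionState H S3)
      (hL : MRel H S1 S3 L) (hR : MRel H S3 S2 R)
      (hP : StackProd P [Sum.inl L, Sum.inl R]) :
      MRel H S1 S2 P

/-- A stack history is well-matched if, for every value `v`, it has as many
`push(v)` operations as `pop(v)` operations. -/
def WellMatched {V : Type} [DecidableEq V] (H : Finset (Operation StackMethod V)) : Prop :=
  ∀ v : V,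
    (H.filter (fun o => o.method = StackMethod.push ∧ o.value = v)).card =
    (H.filter (fun o => o.method = StackMethod.pop ∧ o.value = v)).card

lemma overlap_card_le {V : Type} [DecidableEq V]
    (H F : Finset (Operation StackMethod V)) (hF : F ⊆ H)
    (hov : ∀ o ∈ F, ∀ o' ∈ F, o.tinv ≤ o'.tres) :
    F.card ≤ concurrency H := by
  rcases F.eq_empty_or_nonempty with h | hne
  · simp [h]
  · obtain ⟨o0, ho0, ho0eq⟩ := Finset.exists_mem_eq_sup' hne (fun o => o.tinv)
    set t := F.sup' hne (fun o => o.tinv) with ht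
    have htH : t ∈ histTimes H := by
      apply Finset.mem_union_left
      exact Finset.mem_image.mpr ⟨o0, hF ho0, ho0eq.symm⟩
    have hsub : F ⊆ H.filter (fun o => o.tinv ≤ t ∧ t ≤ o.tres) := by
      intro o ho
      refine Finset.mem_filter.mpr ⟨hF ho, Finset.le_sup' _ ho, ?_⟩
      rw [ho0eq]; exact hov o0 ho0 o ho
    have h1 : F.card ≤ (H.filter (fun o => o.tinv ≤ t ∧ t ≤ o.tres)).card :=
      Finset.card_le_card hsub
    have h2 : (H.filter (fun o => o.tinv ≤ t ∧ t ≤ o.tres)).card ≤ concurrency H := by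
      unfold concurrency
      exact Finset.le_sup (f := fun t => (Finset.filter (fun o => o.tinv ≤ t ∧ t ≤ o.tres) H).card) htH
    exact h1.trans h2

lemma pop_witness {V : Type} [DecidableEq V]
    (H : Finset (Operation StackMethod V))
    {S2 S1 : Finset (Operation StackMethod V)} {P : StackNT V}
    (h : MRel H S2 S1 P) :
    ∀ v : V, P = StackNT.Tv v →
      ∃ o S', o ∈ H ∧ o.method = StackMethod.pop ∧ o.value = v ∧
        o ∉ S' ∧ IsPartitionState H S' ∧ insert o S' = S1 := by
  induction h with
  | base S o h1 h2 ho hno =>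
      intro v hv
      cases hm : o.method <;> rw [hm] at hv <;> simp [baseNT] at hv
      exact ⟨o, S, ho, hm, hv, hno, h1, rfl⟩
  | step Sa Sb Sc P L R h13 h32 h3 hL hR hP ihL ihR =>
      intro v hv
      subst hv
      cases hP with
      | r2 => exact ihR v rfl
      | r3 => exact ihR v rfl

theorem stmt15 {V : Type} [DecidableEq V]
    (H : Finset (Operation StackMethod V)) (hne : H.Nonempty) (hwf : WellFormed H)
    (hwm : WellMatched H) (k : ℕ) (hk : k = concurrency H)
    (S1 : Finset (Operation StackMethod V)) (hS1 : IsPartitionState H S1) :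
    ({P : StackNT V | (P = StackNT.T0 ∨ ∃ v, P = StackNT.Pu v ∨ P = StackNT.Pe v) ∧
        ∃ S2, S1 ⊂ S2 ∧ MRel H S1 S2 P}.Finite ∧
      {P : StackNT V | (P = StackNT.T0 ∨ ∃ v, P = StackNT.Pu v ∨ P = StackNT.Pe v) ∧
        ∃ S2, S1 ⊂ S2 ∧ MRel H S1 S2 P}.ncard ≤ k + 1) ∧
    ({P : StackNT V | (∃ v, P = StackNT.Tv v) ∧
        ∃ S2, S2 ⊂ S1 ∧ MRel H S2 S1 P}.Finite ∧
      {P : StackNT V | (∃ v, P = StackNT.Tv v) ∧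
        ∃ S2, S2 ⊂ S1 ∧ MRel H S2 S1 P}.ncard ≤ k) := by
  classical
  constructor
  · -- Part 1
    set F1 := H.filter (fun o => o ∉ S1 ∧ IsPartitionState H (insert o S1)) with hF1
    have hF1k : F1.card ≤ k := by
      rw [hk]
      apply overlap_card_le H F1 (Finset.filter_subset _ _)
      intro o ho o' ho'
      simp only [hF1, Finset.mem_filter] at ho ho'
      by_cases heq : o = o'
      · subst heq; exact le_of_lt (hwf o ho.1)
      · obtain ⟨_, t, hto⟩ := ho.2.2
        have h1 : ¬ t < o.tinv := by
          intro hlt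
          exact (hto o ho.1).2 hlt (Finset.mem_insert_self o S1)
        have h2 : ¬ o'.tres < t := by
          intro hlt
          have := (hto o' ho'.1).1 hlt
          rcases Finset.mem_insert.mp this with h | h
          · exact heq h.symm
          · exact ho'.2.1 h
        linarith
    have hsub1 : {P : StackNT V | (P = StackNT.T0 ∨ ∃ v, P = StackNT.Pu v ∨ P = StackNT.Pe v) ∧
        ∃ S2, S1 ⊂ S2 ∧ MRel H S1 S2 P} ⊆
        ↑(insert StackNT.T0 (F1.image (fun o => baseNT o.method o.value))) := by
      rintro P ⟨hshape, S2, hS12, hM⟩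
      simp only [Finset.coe_insert, Set.mem_insert_iff, Finset.coe_image, Set.mem_image]
      rcases hshape with rfl | ⟨v, hv⟩
      · left; rfl
      · right
        cases hM with
        | base S o h1 h2 ho hno =>
            exact ⟨o, Finset.mem_filter.mpr ⟨ho, hno, h2⟩, rfl⟩
        | step Sa Sb Sc P L R h13 h32 h3 hL hR hP =>
            cases hP <;> rcases hv with hv | hv <;> simp at hv
    have hfin1 := Set.Finite.subset (Finset.finite_toSet _) hsub1
    refine ⟨hfin1, ?_⟩
    calc _ ≤ (insert StackNT.T0 (F1.image (fun o => baseNT o.method o.value))).card := by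
            rw [← Set.ncard_coe_finset]
            exact Set.ncard_le_ncard hsub1 (Finset.finite_toSet _)
      _ ≤ (F1.image (fun o => baseNT o.method o.value)).card + 1 := Finset.card_insert_le _ _
      _ ≤ F1.card + 1 := by
            have := Finset.card_image_le (s := F1) (f := fun o => baseNT o.method o.value)
            omega
      _ ≤ k + 1 := by omega
  · -- Part 2
    set F2 := H.filter (fun o => o ∈ S1 ∧
        ∃ S', o ∉ S' ∧ IsPartitionState H S' ∧ insert o S' = S1) with hF2
    have hF2k : F2.card ≤ k := by
      rw [hk]
      apply overlap_card_le H F2 (Finset.filter_subset _ _)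
      intro o ho o' ho'
      simp only [hF2, Finset.mem_filter] at ho ho'
      by_cases heq : o = o'
      · subst heq; exact le_of_lt (hwf o ho.1)
      · obtain ⟨S'', hno', ⟨_, t, hto⟩, hins⟩ := ho'.2.2
        have hoS : o ∈ S'' := by
          have : o ∈ insert o' S'' := by rw [hins]; exact ho.2.1
          rcases Finset.mem_insert.mp this with h | h
          · exact absurd h heq
          · exact h
        have h1 : ¬ t < o.tinv := fun hlt => (hto o ho.1).2 hlt hoS
        have h2 : ¬ o'.tres < t := fun hlt => hno' ((hto o' ho'.1).1 hlt)
        linarith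
    have hsub2 : {P : StackNT V | (∃ v, P = StackNT.Tv v) ∧
        ∃ S2, S2 ⊂ S1 ∧ MRel H S2 S1 P} ⊆
        ↑(F2.image (fun o => StackNT.Tv o.value)) := by
      rintro P ⟨⟨v, rfl⟩, S2, hS21, hM⟩
      obtain ⟨o, S', hoH, hpop, hval, hnoS', hpart, hins⟩ := pop_witness H hM v rfl
      simp only [Finset.coe_image, Set.mem_image]
      refine ⟨o, Finset.mem_filter.mpr ⟨hoH, ?_, S', hnoS', hpart, hins⟩, by rw [hval]⟩
      rw [← hins]; exact Finset.mem_insert_self o S'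
    have hfin2 := Set.Finite.subset (Finset.finite_toSet _) hsub2
    refine ⟨hfin2, ?_⟩
    calc _ ≤ (F2.image (fun o => StackNT.Tv o.value)).card := by
            rw [← Set.ncard_coe_finset]
            exact Set.ncard_le_ncard hsub2 (Finset.finite_toSet _)
      _ ≤ F2.card := Finset.card_image_le
      _ ≤ k := hF2k
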